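/- Let X : U → ℝ^{pq} be the parametrization X(a,λ) = (a, a·λ), where a is a p×r matrix of rank r and λ is an r×(q-r) matrix. Then the induced metric (first fundamental form) is the block matrix Ĝ = [[R_{1+λλᵀ}, L_a R_{λᵀ}],[L_{aᵀ} R_λ, L_{aᵀa}]]; concretely Ĝ((c₁,μ₁),(c₂,μ₂)) = tr(c₁ᵀ(c₂ + c₂λλᵀ + aμ₂λᵀ)) + tr(μ₁ᵀ(aᵀaμ₂ + aᵀc₂λ)). -/
import Mathlib


open Matrix

/-- For the parametrization `X(a,λ) = (a, aλ)` of rank-`r` matrices, with derivative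
`DX(c,μ) = (c, cλ + aμ)`, the induced metric
`Ĝ((c₁,μ₁),(c₂,μ₂)) = ⟨DX(c₁,μ₁), DX(c₂,μ₂)⟩` (Frobenius inner product) equals
`tr(c₁ᵀ(c₂ + c₂λλᵀ + aμ₂λᵀ)) + tr(μ₁ᵀ(aᵀaμ₂ + aᵀc₂λ))`. -/
theorem stmt8 (p q r : ℕ) (hr : r ≤ q)
    (a : Matrix (Fin p) (Fin r) ℝ) (ha : a.rank = r)
    (lam : Matrix (Fin r) (Fin (q - r)) ℝ)
    (c₁ c₂ : Matrix (Fin p) (Fin r) ℝ) (μ₁ μ₂ : Matrix (Fin r) (Fin (q - r)) ℝ) :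
    (c₁ᵀ * c₂).trace + ((c₁ * lam + a * μ₁)ᵀ * (c₂ * lam + a * μ₂)).trace =
      (c₁ᵀ * (c₂ + c₂ * lam * lamᵀ + a * μ₂ * lamᵀ)).trace +
        (μ₁ᵀ * (aᵀ * a * μ₂ + aᵀ * c₂ * lam)).trace := by
  simp only [transpose_add, transpose_mul, Matrix.add_mul, Matrix.mul_add, trace_add, mul_assoc]
  rw [trace_mul_comm (lamᵀ * c₁ᵀ) (c₂ * lam), trace_mul_comm (lamᵀ * c₁ᵀ) (a * μ₂)]
  rw [← Matrix.mul_assoc (c₂ * lam) lamᵀ c₁ᵀ, ← Matrix.mul_assoc (a * μ₂) lamᵀ c₁ᵀ, Matrix.mul_assoc aᵀ c₂ lam, Matrix.mul_assoc aᵀ a μ₂]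
  rw [trace_mul_comm (c₂ * lam * lamᵀ) c₁ᵀ, trace_mul_comm (a * μ₂ * lamᵀ) c₁ᵀ]
  simp only [Matrix.mul_assoc]
  ring
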